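/- Let P = ∀xA+^αF1,…,∀xA+^αFn, P' be an expansion proof in which the displayed top-level ∀-expansion +^α is <_P-minimal and +^α does not occur in P'. Then F1,…,Fn,P' is an expansion proof. -/

import Mathlib

/-! Preamble: first-order NNF formulas, expansion trees, expansion proofs with cut,
    LK, LKE, and the cut-reduction relation, following
    "Expansion Trees with Cut". -/

/-- First-order terms. -/
inductive Term : Type where
  | var : ℕ → Term
  | func : ℕ → List Term → Term

namespace Term

/-- The list of variables occurring in a term. -/
def varList : Term → List ℕ
  | .var n => [n]
  | .func _ ts => ts.attach.flatMap fun t => varList t.1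
decreasing_by
  have := List.sizeOf_lt_of_mem t.2
  simp at *; omega

/-- Simultaneous substitution on terms. -/
def subst (σ : ℕ → Term) : Term → Term
  | .var n => σ n
  | .func f ts => .func f (ts.attach.map fun t => subst σ t.1)
decreasing_by
  have := List.sizeOf_lt_of_mem t.2
  simp at *; omega

/-- The variable at the head of a term (junk value `0` for non-variables). -/
def asVar : Term → ℕ
  | .var n => n
  | _ => 0

end Term

/-- The substitution replacing the single variable `x` by the term `t`. -/
def subst1 (x : ℕ) (t : Term) : ℕ → Term := fun n => if n = x then t else .var n

/-- First-order formulas in negation normal form. -/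
inductive Formula : Type where
  | pos : ℕ → List Term → Formula
  | neg : ℕ → List Term → Formula
  | and : Formula → Formula → Formula
  | or  : Formula → Formula → Formula
  | all : ℕ → Formula → Formula
  | ex  : ℕ → Formula → Formula

namespace Formula

/-- De Morgan dual. -/
def dual : Formula → Formula
  | pos p ts => neg p ts
  | neg p ts => pos p ts
  | and A B => or A.dual B.dual
  | or A B => and A.dual B.dual
  | all x A => ex x A.dual
  | ex x A => all x A.dual

/-- Simultaneous substitution on formulas (binders are kept). -/
def subst (σ : ℕ → Term) : Formula → Formula
  | pos p ts => pos p (ts.map (Term.subst σ))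
  | neg p ts => neg p (ts.map (Term.subst σ))
  | and A B => and (A.subst σ) (B.subst σ)
  | or A B => or (A.subst σ) (B.subst σ)
  | all x A => all x (A.subst σ)
  | ex x A => ex x (A.subst σ)

/-- All variables occurring in a formula (including binders). -/
def varList : Formula → List ℕ
  | pos _ ts => ts.flatMap Term.varList
  | neg _ ts => ts.flatMap Term.varList
  | and A B => A.varList ++ B.varList
  | or A B => A.varList ++ B.varList
  | all x A => x :: A.varList
  | ex x A => x :: A.varList

/-- Free variables of a formula. -/
def fvarList : Formula → List ℕ
  | pos _ ts => ts.flatMap Term.varList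
  | neg _ ts => ts.flatMap Term.varList
  | and A B => A.fvarList ++ B.fvarList
  | or A B => A.fvarList ++ B.fvarList
  | all x A => A.fvarList.filter (· ≠ x)
  | ex x A => A.fvarList.filter (· ≠ x)

/-- Bound variables of a formula. -/
def bvarList : Formula → List ℕ
  | pos _ _ => []
  | neg _ _ => []
  | and A B => A.bvarList ++ B.bvarList
  | or A B => A.bvarList ++ B.bvarList
  | all x A => x :: A.bvarList
  | ex x A => x :: A.bvarList

/-- A literal is an atom or a negated atom. -/
def isLit : Formula → Prop
  | pos _ _ => True
  | neg _ _ => True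
  | _ => False

/-- A formula is positive if its top connective is ∨, ∃ or a positive literal. -/
def Positive : Formula → Prop
  | pos _ _ => True
  | or _ _ => True
  | ex _ _ => True
  | _ => False

/-- Logical complexity of a formula. -/
def size : Formula → ℕ
  | pos _ _ => 0
  | neg _ _ => 0
  | and A B => A.size + B.size + 1
  | or A B => A.size + B.size + 1
  | all _ A => A.size + 1
  | ex _ A => A.size + 1

/-- Boolean evaluation of a (quantifier-free) formula under an assignment of
    truth values to atoms; the quantifier cases are junk. -/
def eval (v : ℕ → List Term → Bool) : Formula → Bool
  | pos p ts => v p ts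
  | neg p ts => ! v p ts
  | and A B => A.eval v && B.eval v
  | or A B => A.eval v || B.eval v
  | all _ A => A.eval v
  | ex _ A => A.eval v

end Formula

/-- A sequent of quantifier-free formulas is a (propositional) tautology. -/
def TautList (Γ : List Formula) : Prop := ∀ v, ∃ A ∈ Γ, A.eval v = true

/-- Expansion trees. -/
inductive ETree : Type where
  | lit : Formula → ETree
  | and : ETree → ETree → ETree
  | or  : ETree → ETree → ETree
  | ex  : ℕ → Formula → List (Term × ETree) → ETree
  | all : ℕ → Formula → ℕ → ETree → ETree

namespace ETree

/-- The shallow formula of an expansion tree. -/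
def sh : ETree → Formula
  | lit L => L
  | and a b => .and a.sh b.sh
  | or a b => .or a.sh b.sh
  | ex x A _ => .ex x A
  | all x A _ _ => .all x A

/-- Disjunction of a list of formulas (junk on the empty list). -/
def bigOr : List Formula → Formula
  | [] => Formula.pos 0 []
  | [A] => A
  | A :: B :: rest => .or A (bigOr (B :: rest))

/-- The deep formula of an expansion tree. -/
def dp : ETree → Formula
  | lit L => L
  | and a b => .and a.dp b.dp
  | or a b => .or a.dp b.dp
  | ex _ _ es => bigOr (es.attach.map fun e => dp e.1.2)
  | all _ _ _ E => E.dp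
decreasing_by
  all_goals try (rcases e with ⟨⟨t1, E1⟩, hmem⟩; have := List.sizeOf_lt_of_mem hmem)
  all_goals simp at *
  all_goals omega

/-- The eigenvariables of the ∀-expansions occurring in an expansion tree. -/
def eigenList : ETree → List ℕ
  | lit _ => []
  | and a b => a.eigenList ++ b.eigenList
  | or a b => a.eigenList ++ b.eigenList
  | ex _ _ es => es.attach.flatMap fun e => eigenList e.1.2
  | all _ _ α E => α :: E.eigenList
decreasing_by
  all_goals try (rcases e with ⟨⟨t1, E1⟩, hmem⟩; have := List.sizeOf_lt_of_mem hmem)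
  all_goals simp at *
  all_goals omega

/-- All variables occurring in an expansion tree. -/
def varList : ETree → List ℕ
  | lit L => L.varList
  | and a b => a.varList ++ b.varList
  | or a b => a.varList ++ b.varList
  | ex x A es => x :: A.varList ++ es.attach.flatMap (fun e => e.1.1.varList ++ varList e.1.2)
  | all x A α E => α :: x :: A.varList ++ E.varList
decreasing_by
  all_goals try (rcases e with ⟨⟨t1, E1⟩, hmem⟩; have := List.sizeOf_lt_of_mem hmem)
  all_goals simp at *
  all_goals omega

/-- Substitution applied to an expansion tree.  On a ∀-expansion the
    eigenvariable is replaced by the (head variable of the) image term. -/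
def subst (σ : ℕ → Term) : ETree → ETree
  | lit L => lit (L.subst σ)
  | and a b => and (a.subst σ) (b.subst σ)
  | or a b => or (a.subst σ) (b.subst σ)
  | ex x A es => ex x (A.subst σ) (es.attach.map fun e => (e.1.1.subst σ, subst σ e.1.2))
  | all x A α E => all x (A.subst σ) ((σ α).asVar) (subst σ E)
decreasing_by
  all_goals try (rcases e with ⟨⟨t1, E1⟩, hmem⟩; have := List.sizeOf_lt_of_mem hmem)
  all_goals simp at *
  all_goals omega

/-- Renaming of variables in an expansion tree. -/
def rename (η : ℕ → ℕ) (E : ETree) : ETree := E.subst fun n => Term.var (η n)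

/-- `α` occurs as the eigenvariable of some ∀-expansion of the tree. -/
def hasEigen (α : ℕ) (E : ETree) : Prop := α ∈ E.eigenList

end ETree

/-- Entries of a branch: formulas and integers. -/
inductive BEntry : Type where
  | fm : Formula → BEntry
  | num : ℕ → BEntry

/-- The branches of an expansion tree: all lists of formulas and branch choices
    encountered on a complete path from the root to a leaf. -/
def ETree.brList : ETree → List (List BEntry)
  | .lit L => [[.fm L]]
  | .and a b =>
      ((a.brList).map fun r => .fm (ETree.and a b).sh :: .num 1 :: r) ++
      ((b.brList).map fun r => .fm (ETree.and a b).sh :: .num 2 :: r)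
  | .or a b =>
      ((a.brList).map fun r => .fm (ETree.or a b).sh :: .num 1 :: r) ++
      ((b.brList).map fun r => .fm (ETree.or a b).sh :: .num 2 :: r)
  | .ex x A es => es.attach.flatMap fun e => (ETree.brList e.1.2).map fun r => .fm (Formula.ex x A) :: r
  | .all x A _ E => (E.brList).map fun r => .fm (Formula.all x A) :: r
decreasing_by
  all_goals try (rcases e with ⟨⟨t1, E1⟩, hmem⟩; have := List.sizeOf_lt_of_mem hmem)
  all_goals simp at *
  all_goals omega

/-- A substitution acts on a branch by acting on its formula entries. -/
def brSubst (σ : ℕ → Term) : List BEntry → List BEntry :=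
  List.map fun e => match e with
    | .fm F => .fm (F.subst σ)
    | .num i => .num i

/-- The subtree relation on expansion trees. -/
inductive Subtree : ETree → ETree → Prop where
  | refl (E : ETree) : Subtree E E
  | and_left {F a b} : Subtree F a → Subtree F (.and a b)
  | and_right {F a b} : Subtree F b → Subtree F (.and a b)
  | or_left {F a b} : Subtree F a → Subtree F (.or a b)
  | or_right {F a b} : Subtree F b → Subtree F (.or a b)
  | ex {F x A es} (e : Term × ETree) : e ∈ es → Subtree F e.2 → Subtree F (.ex x A es)
  | all {F x A α E} : Subtree F E → Subtree F (.all x A α E)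

/-- Well-formedness of an expansion tree (Miller's conditions on shallow formulas). -/
inductive ETree.WF : ETree → Prop where
  | lit {L} : L.isLit → WF (.lit L)
  | and {a b} : WF a → WF b → WF (.and a b)
  | or {a b} : WF a → WF b → WF (.or a b)
  | ex {x A es} : es ≠ [] → (∀ e ∈ es, WF e.2) →
      (∀ e ∈ es, ETree.sh e.2 = A.subst (subst1 x e.1)) → WF (.ex x A es)
  | all {x A α E} : WF E → E.sh = A.subst (subst1 x (.var α)) → WF (.all x A α E)

/-- An item of an expansion proof: an expansion tree or a cut (ordered pair,
    positive tree first). -/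
abbrev EItem : Type := ETree ⊕ ETree × ETree

/-- Sequences of cuts and expansion trees. -/
abbrev EProof : Type := List EItem

namespace EItem

/-- The expansion trees of an item. -/
def trees : EItem → List ETree
  | .inl E => [E]
  | .inr c => [c.1, c.2]

/-- Is the item a cut? -/
def isCut : EItem → Prop
  | .inl _ => False
  | .inr _ => True

/-- Well-formedness of an item: trees are well-formed; a cut is an ordered pair
    of dual well-formed trees, the positive one first. -/
def WF : EItem → Prop
  | .inl E => E.WF
  | .inr c => c.1.WF ∧ c.2.WF ∧ c.2.sh = c.1.sh.dual ∧ c.1.sh.Positive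

/-- `α` occurs as eigenvariable of a ∀-expansion in the item. -/
def hasEigen (α : ℕ) (it : EItem) : Prop := ∃ E ∈ it.trees, α ∈ E.eigenList

/-- Apply a function to all trees of an item. -/
def mapTrees (f : ETree → ETree) : EItem → EItem
  | .inl E => .inl (f E)
  | .inr c => .inr (f c.1, f c.2)

end EItem

/-- The shallow sequent of a sequence: the shallow formulas of its trees. -/
def shSeq (P : EProof) : List Formula :=
  P.filterMap fun it => match it with
    | .inl E => some E.sh
    | .inr _ => none

/-- The deep sequent of a sequence: deep formulas of trees and cuts. -/
def dpSeq (P : EProof) : List Formula :=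
  P.map fun it => match it with
    | .inl E => E.dp
    | .inr c => .and c.1.dp c.2.dp

/-- The branches of an item (union over its trees). -/
def EItem.branches (it : EItem) : Set (List BEntry) :=
  {s | ∃ E ∈ it.trees, s ∈ E.brList}

/-- Weak regularity: two branches exhibiting a ∀-expansion with the same
    eigenvariable have equal prefixes, equal ∀-formulas, and live in members of
    the same kind (both trees or both cuts). -/
def WeakRegular (P : EProof) : Prop :=
  ∀ S ∈ P, ∀ T ∈ P, ∀ (s s' r r' : List BEntry) (x y α : ℕ) (A B : Formula),
    (s ++ [BEntry.fm (.all x A), BEntry.fm (A.subst (subst1 x (.var α)))] ++ s') ∈ S.branches →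
    (r ++ [BEntry.fm (.all y B), BEntry.fm (B.subst (subst1 y (.var α)))] ++ r') ∈ T.branches →
    s = r ∧ Formula.all x A = Formula.all y B ∧ (S.isCut ↔ T.isCut)

/-- A position inside a sequence: index of the item, index of the component
    tree inside the item, and a path in that tree. -/
structure TPos : Type where
  item : ℕ
  comp : ℕ
  path : List ℕ

/-- The subtree of an expansion tree at a given path. -/
def ETree.atPath : ETree → List ℕ → Option ETree
  | E, [] => some E
  | .and a _, 0 :: p => a.atPath p
  | .and _ b, 1 :: p => b.atPath p
  | .or a _, 0 :: p => a.atPath p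
  | .or _ b, 1 :: p => b.atPath p
  | .ex _ _ es, k :: p =>
      match es[k]? with
      | some e => e.2.atPath p
      | none => none
  | .all _ _ _ E, 0 :: p => E.atPath p
  | _, _ => none

/-- The subtree of a sequence at a given position. -/
def treeAt (P : EProof) (q : TPos) : Option ETree :=
  match P[q.item]? with
  | some it =>
      match (EItem.trees it)[q.comp]? with
      | some E => E.atPath q.path
      | none => none
  | none => none

/-- Occurrences of expansions and cuts in a sequence. -/
inductive Occ : Type where
  | cut : ℕ → Occ
  | allO : TPos → Occ
  | exO : TPos → ℕ → Occ

/-- The occurrence is an expansion (not a cut). -/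
def Occ.isExpansion : Occ → Prop
  | .cut _ => False
  | _ => True

/-- Position data of an expansion occurrence. -/
def Occ.pos : Occ → Option TPos
  | .cut _ => none
  | .allO p => some p
  | .exO p _ => some p

/-- `i` is the index of a cut in `P`. -/
def IsCutIdx (P : EProof) (i : ℕ) : Prop := ∃ c : ETree × ETree, P[i]? = some (Sum.inr c)

/-- There is a ∀-expansion with eigenvariable `α` at position `q`. -/
def AllEigen (P : EProof) (q : TPos) (α : ℕ) : Prop :=
  ∃ x A E, treeAt P q = some (.all x A α E)

/-- Validity of an occurrence. -/
def ValidOcc (P : EProof) : Occ → Prop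
  | .cut i => IsCutIdx P i
  | .allO q => ∃ x A α E, treeAt P q = some (.all x A α E)
  | .exO q k => ∃ x A es, treeAt P q = some (.ex x A es) ∧ k < es.length

/-- The term of the `k`-th ∃-expansion at position `q` is `t`. -/
def ExTerm (P : EProof) (q : TPos) (k : ℕ) (t : Term) : Prop :=
  ∃ x A es e, treeAt P q = some (.ex x A es) ∧ es[k]? = some e ∧ e.1 = t

/-- The scope of an expansion occurrence: item, component and path prefix of
    everything it dominates. -/
def Occ.scope : Occ → Option (ℕ × ℕ × List ℕ)
  | .cut _ => none
  | .allO p => some (p.item, p.comp, p.path ++ [0])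
  | .exO p k => some (p.item, p.comp, p.path ++ [k])

/-- The expansion `v` dominates the expansion `w`. -/
def Dominates (P : EProof) (v w : Occ) : Prop :=
  ValidOcc P v ∧ ValidOcc P w ∧
    ∃ i c q pw r, v.scope = some (i, c, q) ∧ w.pos = some pw ∧
      pw.item = i ∧ pw.comp = c ∧ pw.path = q ++ r

/-- The immediate dependency relation `<⁰` between occurrences. -/
def Dep0 (P : EProof) (v w : Occ) : Prop :=
  ValidOcc P v ∧ ValidOcc P w ∧
    ((∃ p α, v = .allO p ∧ AllEigen P p α ∧
        ∃ q k t, w = .exO q k ∧ ExTerm P q k t ∧ α ∈ t.varList) ∨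
     Dominates P v w ∨
     (∃ i, v = .cut i ∧ ∃ q, w.pos = some q ∧ q.item = i) ∨
     (∃ p α i c, v = .allO p ∧ AllEigen P p α ∧ w = .cut i ∧
        P[i]? = some (Sum.inr c) ∧ α ∈ (c.1).sh.varList))

/-- The dependency relation `<_P`: the transitive closure of `<⁰`. -/
def Dep (P : EProof) : Occ → Occ → Prop := Relation.TransGen (Dep0 P)

/-- Acyclicity of the dependency relation. -/
def DepAcyclic (P : EProof) : Prop := ∀ o, ¬ Dep P o o

/-- The eigenvariable condition: no eigenvariable of a ∀-expansion of `P`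
    occurs in the shallow sequent of `P`. -/
def EigenCond (P : EProof) : Prop :=
  ∀ q α, AllEigen P q α → ∀ F ∈ shSeq P, α ∉ F.varList

/-- Expansion proofs: well-formed, weakly regular, acyclic, valid sequences of
    cuts and expansion trees satisfying the eigenvariable condition. -/
def IsExpansionProof (P : EProof) : Prop :=
  (∀ it ∈ P, EItem.WF it) ∧ WeakRegular P ∧ DepAcyclic P ∧
    TautList (dpSeq P) ∧ EigenCond P

/-- A sequence is cut-free if it contains no cuts. -/
def CutFreeSeq (P : EProof) : Prop := ∀ c : ETree × ETree, Sum.inr c ∉ P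

/-! ### The sequent calculus LK (sequents as multisets) -/

/-- The one-sided sequent calculus LK on multisets of NNF formulas. -/
inductive LK : Multiset Formula → Type where
  | ax (Γ : Multiset Formula) (p : ℕ) (ts : List Term) :
      LK (Formula.pos p ts ::ₘ Formula.neg p ts ::ₘ Γ)
  | andR {Γ : Multiset Formula} {A B : Formula} :
      LK (A ::ₘ Γ) → LK (B ::ₘ Γ) → LK (Formula.and A B ::ₘ Γ)
  | orR {Γ : Multiset Formula} {A B : Formula} :
      LK (A ::ₘ B ::ₘ Γ) → LK (Formula.or A B ::ₘ Γ)
  | allR {Γ : Multiset Formula} (x : ℕ) (A : Formula) (α : ℕ)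
      (hα : ∀ F ∈ Formula.all x A ::ₘ Γ, α ∉ Formula.varList F) :
      LK (A.subst (subst1 x (.var α)) ::ₘ Γ) → LK (Formula.all x A ::ₘ Γ)
  | exR {Γ : Multiset Formula} (x : ℕ) (A : Formula) (t : Term)
      (ht : ∀ v ∈ t.varList, v ∉ A.bvarList) :
      LK (A.subst (subst1 x t) ::ₘ Formula.ex x A ::ₘ Γ) → LK (Formula.ex x A ::ₘ Γ)
  | cut {Γ : Multiset Formula} (A : Formula) :
      LK (A ::ₘ Γ) → LK (A.dual ::ₘ Γ) → LK Γ

namespace LK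

/-- The eigenvariables of the ∀-inferences of an LK-proof. -/
def eigenList : {Γ : Multiset Formula} → LK Γ → List ℕ
  | _, .ax _ _ _ => []
  | _, .andR p q => p.eigenList ++ q.eigenList
  | _, .orR p => p.eigenList
  | _, .allR _ _ α _ p => α :: p.eigenList
  | _, .exR _ _ _ _ p => p.eigenList
  | _, .cut _ p q => p.eigenList ++ q.eigenList

/-- Cut-freeness of an LK-proof. -/
def cutFree : {Γ : Multiset Formula} → LK Γ → Prop
  | _, .ax _ _ _ => True
  | _, .andR p q => p.cutFree ∧ q.cutFree
  | _, .orR p => p.cutFree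
  | _, .allR _ _ _ _ p => p.cutFree
  | _, .exR _ _ _ _ p => p.cutFree
  | _, .cut _ _ _ => False

/-- Regularity: the eigenvariables of distinct ∀-inferences are pairwise
    distinct and different from the free variables of the conclusion. -/
def Regular {Γ : Multiset Formula} (π : LK Γ) : Prop :=
  π.eigenList.Nodup ∧ ∀ α ∈ π.eigenList, ∀ F ∈ Γ, α ∉ Formula.fvarList F

end LK

/-- The natural coercion of a formula into an expansion tree (∃-quantifiers are
    expanded with their own variable, ∀-quantifiers with an eigenvariable). -/
def Formula.toETree : Formula → ETree
  | .pos p ts => .lit (.pos p ts)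
  | .neg p ts => .lit (.neg p ts)
  | .and A B => .and A.toETree B.toETree
  | .or A B => .or A.toETree B.toETree
  | .ex x A => .ex x A [(.var x, A.toETree)]
  | .all x A => .all x A x A.toETree

/-- The translation `Exp` from LK-proofs to sequences of cuts and expansion
    trees (as a relation, since sequences are identified up to permutation). -/
inductive ExpOf : {Γ : Multiset Formula} → LK Γ → EProof → Prop where
  | ax (Γ : Multiset Formula) (p : ℕ) (ts : List Term) :
      ExpOf (LK.ax Γ p ts)
        ((Γ.toList.map fun F => Sum.inl F.toETree) ++
          [Sum.inl (.lit (.pos p ts)), Sum.inl (.lit (.neg p ts))])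
  | andR {Γ A B} {πA : LK (A ::ₘ Γ)} {πB : LK (B ::ₘ Γ)} {PA PB : EProof} {EA EB : ETree} :
      ExpOf πA (PA ++ [Sum.inl EA]) → EA.sh = A →
      ExpOf πB (PB ++ [Sum.inl EB]) → EB.sh = B →
      ExpOf (LK.andR πA πB) (PA ++ PB ++ [Sum.inl (.and EA EB)])
  | orR {Γ A B} {π : LK (A ::ₘ B ::ₘ Γ)} {P : EProof} {EA EB : ETree} :
      ExpOf π (P ++ [Sum.inl EA, Sum.inl EB]) → EA.sh = A → EB.sh = B →
      ExpOf (LK.orR π) (P ++ [Sum.inl (.or EA EB)])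
  | allR {Γ} {x : ℕ} {A : Formula} {α : ℕ} {hα}
      {π : LK (A.subst (subst1 x (.var α)) ::ₘ Γ)} {P : EProof} {E : ETree} :
      ExpOf π (P ++ [Sum.inl E]) → E.sh = A.subst (subst1 x (.var α)) →
      ExpOf (LK.allR x A α hα π) (P ++ [Sum.inl (.all x A α E)])
  | exR {Γ} {x : ℕ} {A : Formula} {t : Term} {ht}
      {π : LK (A.subst (subst1 x t) ::ₘ Formula.ex x A ::ₘ Γ)}
      {P : EProof} {es : List (Term × ETree)} {Et : ETree} :
      ExpOf π (P ++ [Sum.inl (.ex x A es), Sum.inl Et]) →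
      Et.sh = A.subst (subst1 x t) →
      ExpOf (LK.exR x A t ht π) (P ++ [Sum.inl (.ex x A (es ++ [(t, Et)]))])
  | cut {Γ} {A : Formula} (hA : A.Positive)
      {πp : LK (A ::ₘ Γ)} {πn : LK (A.dual ::ₘ Γ)}
      {Pp Pn : EProof} {Ep En : ETree} :
      ExpOf πp (Pp ++ [Sum.inl Ep]) → Ep.sh = A →
      ExpOf πn (Pn ++ [Sum.inl En]) → En.sh = A.dual →
      ExpOf (LK.cut A πp πn) (Sum.inr (Ep, En) :: (Pp ++ Pn))

/-! ### The calculus LKE on sequences of expansion trees and cuts -/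

/-- The calculus LKE, working on sequences of expansion trees and cuts
    (identified up to permutation). -/
inductive LKE : EProof → Prop where
  | ax (P : EProof) (p : ℕ) (ts : List Term) :
      LKE (P ++ [Sum.inl (.lit (.pos p ts)), Sum.inl (.lit (.neg p ts))])
  | allR (P : EProof) (x : ℕ) (A : Formula) (α : ℕ) (Es : List ETree)
      (hα : α ∉ (Formula.all x A).varList ∧ ∀ F ∈ shSeq P, α ∉ F.varList) :
      LKE (P ++ Es.map Sum.inl) →
      LKE (P ++ Es.map fun E => Sum.inl (.all x A α E))
  | exMove (P : EProof) (x : ℕ) (A : Formula)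
      (es₁ es₂ : List (Term × ETree)) (e : Term × ETree) :
      LKE (P ++ [Sum.inl (.ex x A (es₁ ++ es₂ ++ [e]))]) →
      LKE (P ++ [Sum.inl (.ex x A (es₁ ++ e :: es₂))])
  | exAbsorb (P : EProof) (x : ℕ) (A : Formula) (t : Term)
      (L : List (List (Term × ETree) × List ETree)) :
      LKE (P ++ L.map (fun q => Sum.inl (ETree.ex x A q.1)) ++
            (L.flatMap fun q => q.2.map Sum.inl)) →
      LKE (P ++ L.map fun q => Sum.inl (ETree.ex x A (q.1 ++ q.2.map fun E => (t, E))))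
  | andR (P : EProof) (E1 E2 : ETree) :
      LKE (P ++ [Sum.inl E1]) → LKE (P ++ [Sum.inl E2]) →
      LKE (P ++ [Sum.inl (.and E1 E2)])
  | orR (P : EProof) (E1 E2 : ETree) :
      LKE (P ++ [Sum.inl E1, Sum.inl E2]) → LKE (P ++ [Sum.inl (.or E1 E2)])
  | cut (P : EProof) (Es Fs : List ETree) (hlen : Es.length = Fs.length)
      (hsh : ∀ E ∈ Es, ∀ E' ∈ Es, ETree.sh E = ETree.sh E') :
      LKE (P ++ Es.map Sum.inl) → LKE (P ++ Fs.map Sum.inl) →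
      LKE (P ++ (Es.zip Fs).map fun c => Sum.inr c)
  | perm (P Q : EProof) : LKE P → P.Perm Q → LKE Q

/-! ### The sequent calculus LK on sequents-as-sets, with a cut flag -/

/-- The one-sided sequent calculus LK on sets of NNF formulas; the Boolean flag
    records whether the cut rule may be used. -/
inductive LKS : Bool → Set Formula → Prop where
  | ax (c : Bool) (Γ : Set Formula) (p : ℕ) (ts : List Term) :
      LKS c (insert (Formula.pos p ts) (insert (Formula.neg p ts) Γ))
  | andR {c : Bool} {Γ : Set Formula} {A B : Formula} :
      LKS c (insert A Γ) → LKS c (insert B Γ) → LKS c (insert (Formula.and A B) Γ)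
  | orR {c : Bool} {Γ : Set Formula} {A B : Formula} :
      LKS c (insert A (insert B Γ)) → LKS c (insert (Formula.or A B) Γ)
  | allR {c : Bool} {Γ : Set Formula} (x : ℕ) (A : Formula) (α : ℕ)
      (hα : ∀ F ∈ insert (Formula.all x A) Γ, α ∉ Formula.varList F) :
      LKS c (insert (A.subst (subst1 x (.var α))) Γ) →
      LKS c (insert (Formula.all x A) Γ)
  | exR {c : Bool} {Γ : Set Formula} (x : ℕ) (A : Formula) (t : Term)
      (ht : ∀ v ∈ t.varList, v ∉ A.bvarList) :
      LKS c (insert (A.subst (subst1 x t)) (insert (Formula.ex x A) Γ)) →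
      LKS c (insert (Formula.ex x A) Γ)
  | cut {Γ : Set Formula} (A : Formula) :
      LKS true (insert A Γ) → LKS true (insert A.dual Γ) → LKS true Γ

/-! ### Cut-reduction -/

/-- The substitution `[t/α₁,…,t/α_q]` of a quantifier reduction step. -/
def cutSubst (αs : List ℕ) (t : Term) : ℕ → Term :=
  fun n => if n ∈ αs then t else .var n

/-- All trees occurring in a sequence. -/
def EProof.allTrees (P : EProof) : List ETree := P.flatMap EItem.trees

/-- The quantifier-step redex determined by the data `x`, `A`,
    `cuts = [(es₁,α₁,F₁),…,(es_q,α_q,F_q)]` and the remainder `P`: the sequence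
    of cuts `{∃xA +^{es_j}, ∀x Ā +^{α_j} F_j}` followed by `P`. -/
def QuantRedex (x : ℕ) (A : Formula)
    (cuts : List (List (Term × ETree) × ℕ × ETree)) (P : EProof) : EProof :=
  (cuts.map fun c => Sum.inr (ETree.ex x A c.1, ETree.all x A.dual c.2.1 c.2.2)) ++ P

/-- The result of the quantifier reduction step: all cuts `{E_i, F_j η_i σ_i}`
    together with `P, Pη₁σ₁, …, Pη_lσ_l`. -/
def QuantResult (x : ℕ) (A : Formula)
    (cuts : List (List (Term × ETree) × ℕ × ETree)) (P : EProof)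
    (η : ℕ → ℕ → ℕ) : EProof :=
  let tes := cuts.flatMap fun c => c.1
  let αs := cuts.map fun c => c.2.1
  let Fs := cuts.map fun c => c.2.2
  ((tes.zipIdx.map Prod.swap).flatMap fun ie =>
      Fs.map fun F => Sum.inr (ie.2.2, (F.rename (η ie.1)).subst (cutSubst αs ie.2.1)))
    ++ P
    ++ ((tes.zipIdx.map Prod.swap).flatMap fun ie =>
          P.map (EItem.mapTrees fun G => (G.rename (η ie.1)).subst (cutSubst αs ie.2.1)))

/-- The eigenvariables `β` of the redex `P₁` lying above an occurrence of one of
    the `+^{α_i}` in the dependency order. -/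
def QuantDom (P₁ : EProof) (αs : List ℕ) : Set ℕ :=
  {β | ∃ αi ∈ αs, ∃ o o' : TPos,
     AllEigen P₁ o αi ∧ AllEigen P₁ o' β ∧ Dep P₁ (Occ.allO o) (Occ.allO o')}

/-- `η i` is, for each `i < l`, a renaming to fresh variables of the
    eigenvariables in `D`. -/
def FreshRenamings (P₁ : EProof) (D : Set ℕ) (l : ℕ) (η : ℕ → ℕ → ℕ) : Prop :=
  (∀ i β, β ∉ D → η i β = β) ∧
  (∀ i < l, ∀ β ∈ D, ∀ E ∈ P₁.allTrees, η i β ∉ E.varList) ∧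
  (∀ i < l, ∀ i' < l, ∀ β ∈ D, ∀ β' ∈ D, η i β = η i' β' → i = i' ∧ β = β')

/-- The basic cut-reduction steps (on sequences in a fixed order). -/
inductive Red0 : EProof → EProof → Prop where
  | atomic (p : ℕ) (ts : List Term) (P : EProof) :
      Red0 (Sum.inr (ETree.lit (.pos p ts), ETree.lit (.neg p ts)) :: P) P
  | prop (S : Formula) (Q : List (ETree × ETree × ETree × ETree)) (P : EProof)
      (hQ : Q ≠ [])
      (hsh : ∀ q ∈ Q, (ETree.or q.1 q.2.1).sh = S)
      (hP : ∀ c : ETree × ETree, Sum.inr c ∈ P → c.1.sh ≠ S) :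
      Red0 ((Q.map fun q => Sum.inr (ETree.or q.1 q.2.1, ETree.and q.2.2.1 q.2.2.2)) ++ P)
           ((Q.flatMap fun q => [Sum.inr (q.1, q.2.2.1), Sum.inr (q.2.1, q.2.2.2)]) ++ P)
  | quant (x : ℕ) (A : Formula)
      (cuts : List (List (Term × ETree) × ℕ × ETree)) (P : EProof) (η : ℕ → ℕ → ℕ)
      (hc : cuts ≠ []) (hne : ∀ c ∈ cuts, c.1 ≠ [])
      (hα : ∀ c ∈ cuts, ∀ it ∈ P, ¬ EItem.hasEigen c.2.1 it)
      (hPex : ∀ d : ETree × ETree, Sum.inr d ∈ P →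
        d.1.sh ≠ Formula.ex x A ∧ d.2.sh ≠ Formula.ex x A)
      (hη : FreshRenamings (QuantRedex x A cuts P)
              (QuantDom (QuantRedex x A cuts P) (cuts.map fun c => c.2.1))
              (cuts.flatMap fun c => c.1).length η) :
      Red0 (QuantRedex x A cuts P) (QuantResult x A cuts P η)

/-- The cut-reduction relation `↦` on sequences identified up to permutation. -/
def Red (P Q : EProof) : Prop :=
  ∃ P' Q', P.Perm P' ∧ Red0 P' Q' ∧ Q'.Perm Q

/-! ### Equivalence classes of cuts -/

/-- Two cuts are similar if they are quantified cuts with the same shallow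
    formula `∃x A`. -/
def CutSim : ETree × ETree → ETree × ETree → Prop := fun c d =>
  ∃ x A es α F es' α' F',
    c = (ETree.ex x A es, ETree.all x A.dual α F) ∧
    d = (ETree.ex x A es', ETree.all x A.dual α' F')

/-- The positions `i` and `j` carry cuts of `P` lying in the same
    ∼-equivalence class (the reflexive closure of `CutSim` on cut positions). -/
def SimIdx (P : EProof) (i j : ℕ) : Prop :=
  (i = j ∧ IsCutIdx P i) ∨
  (∃ c d, P[i]? = some (Sum.inr c) ∧ P[j]? = some (Sum.inr d) ∧ CutSim c d)

/-- The relation `≺` on ∼-equivalence classes of cuts, expressed on positions: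
    (class of `i`) ≺ (class of `j`) iff some member of the class of `i` is
    `<_P`-below every member of the class of `j`. -/
def ClassLt (P : EProof) (i j : ℕ) : Prop :=
  ∃ i', SimIdx P i' i ∧ ∀ j', SimIdx P j' j → Dep P (Occ.cut i') (Occ.cut j')

/-- The cut at position `i` has rank `r`. -/
def RkIdx (P : EProof) (i : ℕ) (r : ℕ) : Prop :=
  ∃ c : ETree × ETree, P[i]? = some (Sum.inr c) ∧ (c.1).sh.size = r

/-- The cut at position `i` is maximal: no cut has bigger rank, and no cut of
    the same rank is above it in the dependency order. -/
def MaximalCutIdx (P : EProof) (i : ℕ) : Prop :=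
  IsCutIdx P i ∧ ∀ j r r', RkIdx P i r → RkIdx P j r' →
    r' ≤ r ∧ (r' = r → ¬ Dep P (Occ.cut i) (Occ.cut j))

/-- A substitution may be applied to an expansion tree only if it maps each of
    its eigenvariables to a variable. -/
def SubstOK (σ : ℕ → Term) (E : ETree) : Prop :=
  ∀ α ∈ E.eigenList, ∃ n, σ α = Term.var n


/-! Auxiliary lemmas for the proof of Statement 12. -/

theorem term_var_subst1 (x α : ℕ) : ∀ t : Term, ∀ β, β ∈ (Term.subst (subst1 x (.var α)) t).varList → β = α ∨ β ∈ t.varList := by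
  intro t
  induction t using Term.subst.induct with
  | case1 n =>
    intro β hβ
    simp only [Term.subst, subst1] at hβ
    split at hβ
    · simp [Term.varList] at hβ; left; exact hβ
    · simp [Term.varList] at hβ ⊢; right; exact hβ
  | case2 f ts ih =>
    intro β hβ
    rw [Term.subst] at hβ
    rw [Term.varList] at hβ
    simp only [List.mem_flatMap, List.mem_attach, true_and] at hβ
    obtain ⟨⟨u, hu⟩, hβu⟩ := hβ
    simp only [List.mem_map] at hu
    obtain ⟨e, he⟩ := hu
    rcases ih e β (he.2 ▸ hβu) with h | h
    · exact Or.inl h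
    · right
      rw [Term.varList]
      simp only [List.mem_flatMap, List.mem_attach, true_and]
      exact ⟨e, h⟩

theorem term_subst1_congr (x α α' : ℕ) (hne : α ≠ α') :
    ∀ t : Term, Term.subst (subst1 x (.var α)) t = Term.subst (subst1 x (.var α')) t →
    ∀ γ, Term.subst (subst1 x (.var γ)) t = Term.subst (subst1 x (.var α)) t := by
  intro t
  induction t using Term.subst.induct with
  | case1 n =>
    intro h γ
    simp only [Term.subst, subst1] at *
    split at h
    · split <;> simp_all
    · simp_all
  | case2 f ts ih =>
    intro h γ
    rw [Term.subst, Term.subst] at h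
    rw [Term.subst, Term.subst]
    simp only [Term.func.injEq, true_and] at h ⊢
    rw [List.map_inj_left] at h ⊢
    intro e he
    exact ih e (h e he) γ

theorem fml_subst1_congr (x α α' : ℕ) (hne : α ≠ α') :
    ∀ B : Formula, Formula.subst (subst1 x (.var α)) B = Formula.subst (subst1 x (.var α')) B →
    ∀ γ, Formula.subst (subst1 x (.var γ)) B = Formula.subst (subst1 x (.var α)) B := by
  intro B
  induction B with
  | pos p ts =>
    intro h γ
    simp only [Formula.subst, Formula.pos.injEq, true_and, List.map_inj_left] at h ⊢
    exact fun t ht => term_subst1_congr x α α' hne t (h t ht) γ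
  | neg p ts =>
    intro h γ
    simp only [Formula.subst, Formula.neg.injEq, true_and, List.map_inj_left] at h ⊢
    exact fun t ht => term_subst1_congr x α α' hne t (h t ht) γ
  | and B C ihB ihC =>
    intro h γ
    simp only [Formula.subst, Formula.and.injEq] at h ⊢
    exact ⟨ihB h.1 γ, ihC h.2 γ⟩
  | or B C ihB ihC =>
    intro h γ
    simp only [Formula.subst, Formula.or.injEq] at h ⊢
    exact ⟨ihB h.1 γ, ihC h.2 γ⟩
  | all y B ihB =>
    intro h γ
    simp only [Formula.subst, Formula.all.injEq, true_and] at h ⊢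
    exact ihB h γ
  | ex y B ihB =>
    intro h γ
    simp only [Formula.subst, Formula.ex.injEq, true_and] at h ⊢
    exact ihB h γ

theorem fml_var_subst1 (x α : ℕ) :
    ∀ B : Formula, ∀ β, β ∈ (Formula.subst (subst1 x (.var α)) B).varList → β = α ∨ β ∈ B.varList := by
  intro B
  induction B with
  | pos p ts =>
    intro β hβ
    simp only [Formula.subst, Formula.varList, List.mem_flatMap, List.mem_map] at hβ ⊢
    obtain ⟨u, ⟨t, ht, rfl⟩, hβu⟩ := hβ
    rcases term_var_subst1 x α t β hβu with h | h
    · exact Or.inl h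
    · exact Or.inr ⟨t, ht, h⟩
  | neg p ts =>
    intro β hβ
    simp only [Formula.subst, Formula.varList, List.mem_flatMap, List.mem_map] at hβ ⊢
    obtain ⟨u, ⟨t, ht, rfl⟩, hβu⟩ := hβ
    rcases term_var_subst1 x α t β hβu with h | h
    · exact Or.inl h
    · exact Or.inr ⟨t, ht, h⟩
  | and B C ihB ihC =>
    intro β hβ
    simp only [Formula.subst, Formula.varList, List.mem_append] at hβ ⊢
    rcases hβ with h | h
    · rcases ihB β h with h' | h' <;> tauto
    · rcases ihC β h with h' | h' <;> tauto
  | or B C ihB ihC =>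
    intro β hβ
    simp only [Formula.subst, Formula.varList, List.mem_append] at hβ ⊢
    rcases hβ with h | h
    · rcases ihB β h with h' | h' <;> tauto
    · rcases ihC β h with h' | h' <;> tauto
  | all y B ihB =>
    intro β hβ
    simp only [Formula.subst, Formula.varList, List.mem_cons] at hβ ⊢
    rcases hβ with h | h
    · tauto
    · rcases ihB β h with h' | h' <;> tauto
  | ex y B ihB =>
    intro β hβ
    simp only [Formula.subst, Formula.varList, List.mem_cons] at hβ ⊢
    rcases hβ with h | h
    · tauto
    · rcases ihB β h with h' | h' <;> tauto

theorem brList_head : ∀ (E : ETree) (b : List BEntry), b ∈ E.brList → ∃ t, b = .fm E.sh :: t := by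
  intro E b hb
  cases E with
  | lit L => rw [ETree.brList] at hb; simp at hb; exact ⟨[], by simp [hb, ETree.sh]⟩
  | and a c =>
    rw [ETree.brList] at hb
    simp only [List.mem_append, List.mem_map] at hb
    rcases hb with ⟨r, _, rfl⟩ | ⟨r, _, rfl⟩ <;> exact ⟨_, rfl⟩
  | or a c =>
    rw [ETree.brList] at hb
    simp only [List.mem_append, List.mem_map] at hb
    rcases hb with ⟨r, _, rfl⟩ | ⟨r, _, rfl⟩ <;> exact ⟨_, rfl⟩
  | ex y B es =>
    rw [ETree.brList] at hb
    simp only [List.mem_flatMap, List.mem_map, List.mem_attach, true_and] at hb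
    obtain ⟨e, r, _, rfl⟩ := hb
    exact ⟨r, rfl⟩
  | all y B γ E0 =>
    rw [ETree.brList] at hb
    simp only [List.mem_map] at hb
    obtain ⟨r, _, rfl⟩ := hb
    exact ⟨r, rfl⟩

theorem brList_nonempty : ∀ (E : ETree), E.WF → ∃ b, b ∈ E.brList := by
  intro E hWF
  induction hWF with
  | lit h => rename_i L; exact ⟨[.fm L], by rw [ETree.brList]; simp⟩
  | and h1 h2 ih1 ih2 =>
    obtain ⟨b, hb⟩ := ih1
    exact ⟨_, by rw [ETree.brList]; simp only [List.mem_append, List.mem_map]; exact Or.inl ⟨b, hb, rfl⟩⟩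
  | or h1 h2 ih1 ih2 =>
    obtain ⟨b, hb⟩ := ih1
    exact ⟨_, by rw [ETree.brList]; simp only [List.mem_append, List.mem_map]; exact Or.inl ⟨b, hb, rfl⟩⟩
  | ex hne hWF hsh ih =>
    rename_i y B es
    obtain ⟨e, he⟩ := List.exists_mem_of_ne_nil es hne
    obtain ⟨b, hb⟩ := ih e he
    refine ⟨.fm (Formula.ex y B) :: b, ?_⟩
    rw [ETree.brList]
    simp only [List.mem_flatMap, List.mem_map, List.mem_attach, true_and]
    exact ⟨⟨e, he⟩, b, hb, rfl⟩
  | all h hsh ih =>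
    obtain ⟨b, hb⟩ := ih
    exact ⟨_, by rw [ETree.brList]; simp only [List.mem_map]; exact ⟨b, hb, rfl⟩⟩

theorem eigen_branch : ∀ (E : ETree), E.WF → ∀ β ∈ E.eigenList,
    ∃ s y B s', (s ++ [BEntry.fm (.all y B), BEntry.fm (B.subst (subst1 y (.var β)))] ++ s') ∈ E.brList := by
  intro E hWF
  induction hWF with
  | lit h => intro β hβ; rw [ETree.eigenList] at hβ; simp at hβ
  | and h1 h2 ih1 ih2 =>
    rename_i a c
    intro β hβ
    rw [ETree.eigenList] at hβ
    rw [List.mem_append] at hβ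
    rcases hβ with h | h
    · obtain ⟨s, y, B, s', hs⟩ := ih1 β h
      refine ⟨.fm (ETree.and a c).sh :: .num 1 :: s, y, B, s', ?_⟩
      rw [ETree.brList]
      simp only [List.mem_append, List.mem_map]
      exact Or.inl ⟨_, hs, rfl⟩
    · obtain ⟨s, y, B, s', hs⟩ := ih2 β h
      refine ⟨.fm (ETree.and a c).sh :: .num 2 :: s, y, B, s', ?_⟩
      rw [ETree.brList]
      simp only [List.mem_append, List.mem_map]
      exact Or.inr ⟨_, hs, rfl⟩
  | or h1 h2 ih1 ih2 =>
    rename_i a c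
    intro β hβ
    rw [ETree.eigenList] at hβ
    rw [List.mem_append] at hβ
    rcases hβ with h | h
    · obtain ⟨s, y, B, s', hs⟩ := ih1 β h
      refine ⟨.fm (ETree.or a c).sh :: .num 1 :: s, y, B, s', ?_⟩
      rw [ETree.brList]
      simp only [List.mem_append, List.mem_map]
      exact Or.inl ⟨_, hs, rfl⟩
    · obtain ⟨s, y, B, s', hs⟩ := ih2 β h
      refine ⟨.fm (ETree.or a c).sh :: .num 2 :: s, y, B, s', ?_⟩
      rw [ETree.brList]
      simp only [List.mem_append, List.mem_map]
      exact Or.inr ⟨_, hs, rfl⟩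
  | ex hne hWF hsh ih =>
    rename_i y0 B0 es
    intro β hβ
    rw [ETree.eigenList] at hβ
    simp only [List.mem_flatMap, List.mem_attach, true_and] at hβ
    obtain ⟨⟨e, he⟩, hβe⟩ := hβ
    obtain ⟨s, y, B, s', hs⟩ := ih e he β hβe
    refine ⟨.fm (Formula.ex y0 B0) :: s, y, B, s', ?_⟩
    rw [ETree.brList]
    simp only [List.mem_flatMap, List.mem_map, List.mem_attach, true_and]
    exact ⟨⟨e, he⟩, _, hs, rfl⟩
  | all h hsh ih =>
    rename_i y0 B0 γ E0
    intro β hβ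
    rw [ETree.eigenList] at hβ
    rw [List.mem_cons] at hβ
    rcases hβ with rfl | hβ
    · obtain ⟨b, hb⟩ := brList_nonempty E0 h
      obtain ⟨t, rfl⟩ := brList_head E0 b hb
      refine ⟨[], y0, B0, t, ?_⟩
      rw [ETree.brList]
      simp only [List.mem_map]
      refine ⟨_, hb, ?_⟩
      rw [hsh]; rfl
    · obtain ⟨s, y, B, s', hs⟩ := ih β hβ
      refine ⟨.fm (Formula.all y0 B0) :: s, y, B, s', ?_⟩
      rw [ETree.brList]
      simp only [List.mem_map]
      exact ⟨_, hs, rfl⟩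

theorem atPath_eigen : ∀ (p : List ℕ) (E : ETree) (y : ℕ) (B : Formula) (β : ℕ) (E' : ETree),
    E.atPath p = some (.all y B β E') → β ∈ E.eigenList := by
  intro p
  induction p with
  | nil =>
    intro E y B β E' h
    rw [ETree.atPath] at h
    cases h
    rw [ETree.eigenList]; simp
  | cons k p ih =>
    intro E y B β E' h
    cases E with
    | lit L => simp [ETree.atPath] at h
    | and a b =>
      match k, h with
      | 0, h =>
        rw [ETree.eigenList]; rw [List.mem_append]
        exact Or.inl (ih a y B β E' h)
      | 1, h =>
        rw [ETree.eigenList]; rw [List.mem_append]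
        exact Or.inr (ih b y B β E' h)
      | (n+2), h => simp [ETree.atPath] at h
    | or a b =>
      match k, h with
      | 0, h =>
        rw [ETree.eigenList]; rw [List.mem_append]
        exact Or.inl (ih a y B β E' h)
      | 1, h =>
        rw [ETree.eigenList]; rw [List.mem_append]
        exact Or.inr (ih b y B β E' h)
      | (n+2), h => simp [ETree.atPath] at h
    | ex y0 B0 es =>
      rw [ETree.atPath] at h
      rw [ETree.eigenList]
      simp only [List.mem_flatMap, List.mem_attach, true_and]
      cases hk : es[k]? with
      | none => rw [hk] at h; simp at h
      | some e =>
        rw [hk] at h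
        exact ⟨⟨e, List.mem_of_getElem? hk⟩, ih e.2 y B β E' h⟩
    | all y0 B0 γ E0 =>
      match k, h with
      | 0, h =>
        rw [ETree.eigenList]; rw [List.mem_cons]
        exact Or.inr (ih E0 y B β E' h)
      | (n+1), h => simp [ETree.atPath] at h

theorem item_tree_WF {it : EItem} (h : EItem.WF it) : ∀ G ∈ it.trees, G.WF := by
  cases it with
  | inl E => intro G hG; simp [EItem.trees] at hG; subst hG; exact h
  | inr c =>
    intro G hG; simp [EItem.trees] at hG
    rcases hG with rfl | rfl
    · exact h.1
    · exact h.2.1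

theorem key_contra (P : EProof) (hWR : WeakRegular P)
    (hWFall : ∀ it ∈ P, EItem.WF it)
    (x : ℕ) (A : Formula) (α α₀ : ℕ) (T : EItem) (hT : T ∈ P)
    (hok : EItem.hasEigen α T → α₀ = α)
    (y : ℕ) (B : Formula) (u w c : List BEntry)
    (hc : c = u ++ [BEntry.fm (.all y B), BEntry.fm (B.subst (subst1 y (.var α₀)))] ++ w)
    (hb : (BEntry.fm (.all x A) :: c) ∈ T.branches)
    (hhead : c.head? = some (.fm (A.subst (subst1 x (.var α))))) : False := by
  obtain ⟨G, hG, hbr⟩ := hb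
  obtain ⟨t, ht⟩ := brList_head G _ hbr
  have hshG : G.sh = Formula.all x A := by
    have := congrArg List.head? ht
    simp at this
    exact this.symm
  cases G with
  | lit L =>
    rw [ETree.brList] at hbr
    simp at hbr
    rw [hc] at hbr
    simp at hbr
  | and a b => rw [ETree.sh] at hshG; exact Formula.noConfusion hshG
  | or a b => rw [ETree.sh] at hshG; exact Formula.noConfusion hshG
  | ex y0 B0 es => rw [ETree.sh] at hshG; exact Formula.noConfusion hshG
  | all y0 B0 γ E =>
    rw [ETree.sh] at hshG
    injection hshG with h1 h2
    have h1' := h1.symm; subst h1'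
    have h2' := h2.symm; subst h2'
    rw [ETree.brList] at hbr
    simp only [List.mem_map] at hbr
    obtain ⟨c', hc', hcc⟩ := hbr
    have hc'eq : c = c' := by injection hcc with _ h; exact h.symm
    subst hc'eq
    have hWFG : (ETree.all x A γ E).WF := item_tree_WF (hWFall T hT) _ hG
    have hWFE : E.WF := by cases hWFG with | all h hsh => exact h
    have hshE : E.sh = A.subst (subst1 x (.var γ)) := by cases hWFG with | all h hsh => exact hsh
    obtain ⟨c'', hc''⟩ := brList_head E c hc'
    have eq1 : A.subst (subst1 x (.var γ)) = A.subst (subst1 x (.var α)) := by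
      rw [hc''] at hhead
      simp at hhead
      rw [hshE] at hhead
      exact hhead
    have heq : A.subst (subst1 x (.var α₀)) = A.subst (subst1 x (.var γ)) := by
      by_cases hγ : γ = α
      · subst hγ
        have : α₀ = γ := hok ⟨_, hG, by rw [ETree.eigenList]; simp⟩
        rw [this]
      · exact fml_subst1_congr x γ α hγ A eq1 α₀
    have hcform : c = BEntry.fm (A.subst (subst1 x (.var α₀))) :: c'' := by
      rw [hc'', hshE, heq]
    have hmem1 : ([] ++ [BEntry.fm (.all x A), BEntry.fm (A.subst (subst1 x (.var α₀)))] ++ c'')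
        ∈ T.branches := by
      refine ⟨_, hG, ?_⟩
      rw [ETree.brList]
      simp only [List.mem_map]
      exact ⟨c, hc', by rw [hcform]; rfl⟩
    have hmem2 : ((BEntry.fm (Formula.all x A) :: u) ++
        [BEntry.fm (.all y B), BEntry.fm (B.subst (subst1 y (.var α₀)))] ++ w) ∈ T.branches := by
      refine ⟨_, hG, ?_⟩
      rw [ETree.brList]
      simp only [List.mem_map]
      exact ⟨c, hc', by rw [hc]; rfl⟩
    have := (hWR T hT T hT [] c'' (BEntry.fm (Formula.all x A) :: u) w x y α₀ A B hmem1 hmem2).1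
    cases this

def pad (n : ℕ) (q : TPos) : TPos := if q.item < n then ⟨q.item, q.comp, 0 :: q.path⟩ else q

def padO (n : ℕ) : Occ → Occ
  | .cut i => .cut i
  | .allO q => .allO (pad n q)
  | .exO q k => .exO (pad n q) k

@[simp] lemma pad_item (n : ℕ) (q : TPos) : (pad n q).item = q.item := by
  unfold pad; split <;> rfl

@[simp] lemma pad_comp (n : ℕ) (q : TPos) : (pad n q).comp = q.comp := by
  unfold pad; split <;> rfl

lemma pos_pad (n : ℕ) {o : Occ} {p : TPos} (h : o.pos = some p) :
    (padO n o).pos = some (pad n p) := by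
  cases o <;> simp [Occ.pos, padO] at h ⊢ <;> rw [h]

section Strip

variable (x : ℕ) (A : Formula) (α : ℕ) (Fs : List ETree) (P' : EProof)

local notation "Pbig" => (Fs.map fun F => Sum.inl (ETree.all x A α F)) ++ P'
local notation "Qsm" => Fs.map Sum.inl ++ P'

lemma get_lt {i : ℕ} (hi : i < Fs.length) :
    (Qsm : EProof)[i]? = some (Sum.inl Fs[i]) ∧
    (Pbig : EProof)[i]? = some (Sum.inl (ETree.all x A α Fs[i])) := by
  constructor
  · rw [List.getElem?_append_left (by simpa using hi), List.getElem?_map,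
      List.getElem?_eq_getElem hi]
    rfl
  · rw [List.getElem?_append_left (by simpa using hi), List.getElem?_map,
      List.getElem?_eq_getElem hi]
    rfl

lemma get_ge {i : ℕ} (hi : ¬ i < Fs.length) :
    (Qsm : EProof)[i]? = (Pbig : EProof)[i]? := by
  rw [List.getElem?_append_right (by simpa using Nat.le_of_not_lt hi),
    List.getElem?_append_right (by simpa using Nat.le_of_not_lt hi)]
  simp

lemma treeAt_pad {q : TPos} {E : ETree} (h : treeAt Qsm q = some E) :
    treeAt Pbig (pad Fs.length q) = some E := by
  obtain ⟨i, c, p⟩ := q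
  by_cases hi : i < Fs.length
  · have hQ := (get_lt x A α Fs P' hi).1
    have hPg := (get_lt x A α Fs P' hi).2
    unfold treeAt at h ⊢
    rw [hQ] at h
    simp only [EItem.trees] at h
    rw [pad, if_pos hi]
    simp only
    rw [hPg]
    simp only [EItem.trees]
    match c, h with
    | 0, h =>
      simp only [List.getElem?_cons_zero] at h ⊢
      simpa [ETree.atPath] using h
    | (c+1), h => simp at h
  · rw [pad, if_neg hi]
    unfold treeAt at h ⊢
    rw [← get_ge x A α Fs P' hi]
    exact h

lemma inr_get {i : ℕ} {c : ETree × ETree} (h : (Qsm : EProof)[i]? = some (Sum.inr c)) :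
    (Pbig : EProof)[i]? = some (Sum.inr c) := by
  by_cases hi : i < Fs.length
  · rw [(get_lt x A α Fs P' hi).1] at h; cases h
  · rw [← get_ge x A α Fs P' hi]; exact h

lemma isCutIdx_pad {i : ℕ} (h : IsCutIdx Qsm i) : IsCutIdx Pbig i := by
  obtain ⟨c, hc⟩ := h
  exact ⟨c, inr_get x A α Fs P' hc⟩

lemma validOcc_pad {o : Occ} (h : ValidOcc Qsm o) : ValidOcc Pbig (padO Fs.length o) := by
  cases o with
  | cut i => exact isCutIdx_pad x A α Fs P' h
  | allO q =>
    obtain ⟨y, B, β, E, hE⟩ := h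
    exact ⟨y, B, β, E, treeAt_pad x A α Fs P' hE⟩
  | exO q k =>
    obtain ⟨y, B, es, hE, hk⟩ := h
    exact ⟨y, B, es, treeAt_pad x A α Fs P' hE, hk⟩

lemma allEigen_pad {q : TPos} {β : ℕ} (h : AllEigen Qsm q β) :
    AllEigen Pbig (pad Fs.length q) β := by
  obtain ⟨y, B, E, hE⟩ := h
  exact ⟨y, B, E, treeAt_pad x A α Fs P' hE⟩

lemma exTerm_pad {q : TPos} {k : ℕ} {t : Term} (h : ExTerm Qsm q k t) :
    ExTerm Pbig (pad Fs.length q) k t := by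
  obtain ⟨y, B, es, e, hE, he, ht⟩ := h
  exact ⟨y, B, es, e, treeAt_pad x A α Fs P' hE, he, ht⟩

lemma dominates_pad {v w : Occ} (h : Dominates Qsm v w) :
    Dominates Pbig (padO Fs.length v) (padO Fs.length w) := by
  obtain ⟨hv, hw, i, c, q, pw, r, hscope, hpos, hitem, hcomp, hpath⟩ := h
  refine ⟨validOcc_pad x A α Fs P' hv, validOcc_pad x A α Fs P' hw, ?_⟩
  by_cases hi : i < Fs.length
  · cases v with
    | cut j => simp [Occ.scope] at hscope
    | allO p =>
      simp only [Occ.scope, Option.some.injEq, Prod.mk.injEq] at hscope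
      obtain ⟨h1, h2, h3⟩ := hscope
      refine ⟨i, c, 0 :: q, pad Fs.length pw, r, ?_, pos_pad Fs.length hpos, by simp [hitem], by simp [hcomp], ?_⟩
      · simp only [padO, Occ.scope, Option.some.injEq, Prod.mk.injEq]
        rw [pad, if_pos (h1 ▸ hi)]
        simp [h1, h2, ← h3]
      · rw [pad, if_pos (hitem ▸ hi)]
        simp [hpath]
    | exO p k =>
      simp only [Occ.scope, Option.some.injEq, Prod.mk.injEq] at hscope
      obtain ⟨h1, h2, h3⟩ := hscope
      refine ⟨i, c, 0 :: q, pad Fs.length pw, r, ?_, pos_pad Fs.length hpos, by simp [hitem], by simp [hcomp], ?_⟩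
      · simp only [padO, Occ.scope, Option.some.injEq, Prod.mk.injEq]
        rw [pad, if_pos (h1 ▸ hi)]
        simp [h1, h2, ← h3]
      · rw [pad, if_pos (hitem ▸ hi)]
        simp [hpath]
  · cases v with
    | cut j => simp [Occ.scope] at hscope
    | allO p =>
      simp only [Occ.scope, Option.some.injEq, Prod.mk.injEq] at hscope
      obtain ⟨h1, h2, h3⟩ := hscope
      refine ⟨i, c, q, pad Fs.length pw, r, ?_, pos_pad Fs.length hpos, by simp [hitem], by simp [hcomp], ?_⟩
      · simp only [padO, Occ.scope, Option.some.injEq, Prod.mk.injEq]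
        rw [pad, if_neg (h1 ▸ hi)]
        simp [h1, h2, h3]
      · rw [pad, if_neg (hitem ▸ hi)]
        exact hpath
    | exO p k =>
      simp only [Occ.scope, Option.some.injEq, Prod.mk.injEq] at hscope
      obtain ⟨h1, h2, h3⟩ := hscope
      refine ⟨i, c, q, pad Fs.length pw, r, ?_, pos_pad Fs.length hpos, by simp [hitem], by simp [hcomp], ?_⟩
      · simp only [padO, Occ.scope, Option.some.injEq, Prod.mk.injEq]
        rw [pad, if_neg (h1 ▸ hi)]
        simp [h1, h2, h3]
      · rw [pad, if_neg (hitem ▸ hi)]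
        exact hpath

lemma dep0_pad {v w : Occ} (h : Dep0 Qsm v w) :
    Dep0 Pbig (padO Fs.length v) (padO Fs.length w) := by
  obtain ⟨hv, hw, hcase⟩ := h
  refine ⟨validOcc_pad x A α Fs P' hv, validOcc_pad x A α Fs P' hw, ?_⟩
  rcases hcase with ⟨p, β, rfl, hAE, q, k, t, rfl, hET, hβt⟩ | hdom | ⟨i, rfl, q, hq, hqi⟩ | ⟨p, β, i, c, rfl, hAE, rfl, hc, hβ⟩
  · exact Or.inl ⟨pad Fs.length p, β, rfl, allEigen_pad x A α Fs P' hAE,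
      pad Fs.length q, k, t, rfl, exTerm_pad x A α Fs P' hET, hβt⟩
  · exact Or.inr (Or.inl (dominates_pad x A α Fs P' hdom))
  · exact Or.inr (Or.inr (Or.inl ⟨i, rfl, pad Fs.length q, pos_pad Fs.length hq, by simp [hqi]⟩))
  · exact Or.inr (Or.inr (Or.inr ⟨pad Fs.length p, β, i, c, rfl,
      allEigen_pad x A α Fs P' hAE, rfl, inr_get x A α Fs P' hc, hβ⟩))

end Strip

lemma head?_append_cons (s : List BEntry) (a : BEntry) (l l' : List BEntry) :
    (s ++ a :: l).head? = (s ++ a :: l').head? := by cases s <;> simp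

lemma treeAt_hasEigen {R : EProof} {i c : ℕ} {p : List ℕ} {y : ℕ} {B : Formula} {β : ℕ} {E' : ETree}
    (h : treeAt R ⟨i, c, p⟩ = some (.all y B β E')) :
    ∃ it, R[i]? = some it ∧ EItem.hasEigen β it := by
  unfold treeAt at h
  cases hR : R[i]? with
  | none => rw [hR] at h; simp at h
  | some it =>
    rw [hR] at h
    simp only at h
    cases hG : (EItem.trees it)[c]? with
    | none => rw [hG] at h; simp at h
    | some G =>
      rw [hG] at h
      exact ⟨it, rfl, G, List.mem_of_getElem? hG, atPath_eigen p G y B β E' h⟩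

/-- stripping a `<_P`-minimal top-level ∀-expansion `+^α`
    (not occurring in the rest `P'`) from an expansion proof yields an
    expansion proof. -/
theorem min_all_strip (x : ℕ) (A : Formula) (α : ℕ)
    (Fs : List ETree) (P' : EProof) (hne : Fs ≠ [])
    (hP : IsExpansionProof ((Fs.map fun F => Sum.inl (ETree.all x A α F)) ++ P'))
    (hmin : ∀ i < Fs.length, ∀ o : Occ,
      ¬ Dep ((Fs.map fun F => Sum.inl (ETree.all x A α F)) ++ P') o
          (Occ.allO ⟨i, 0, []⟩))
    (hα : ∀ it ∈ P', ¬ EItem.hasEigen α it) :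
    IsExpansionProof (Fs.map Sum.inl ++ P') := by
  obtain ⟨hWF, hWR, hAC, hTaut, hEC⟩ := hP
  have hmemP : ∀ F ∈ Fs,
      (Sum.inl (ETree.all x A α F) : EItem) ∈ (Fs.map fun F => Sum.inl (ETree.all x A α F)) ++ P' :=
    fun F hF => List.mem_append_left _ (List.mem_map_of_mem hF)
  have hmemP' : ∀ it ∈ P', it ∈ (Fs.map fun F => Sum.inl (ETree.all x A α F)) ++ P' :=
    fun it h => List.mem_append_right _ h
  have hWFF : ∀ F ∈ Fs, F.WF ∧ F.sh = A.subst (subst1 x (.var α)) := by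
    intro F hF
    have := hWF _ (hmemP F hF)
    simp only [EItem.WF] at this
    cases this with | all h hsh => exact ⟨h, hsh⟩
  -- the eigenvariable α does not occur in any F ∈ Fs
  have hclaim : ∀ F ∈ Fs, α ∉ F.eigenList := by
    intro F hF hmem
    obtain ⟨s, y, B, s', hs⟩ := eigen_branch F (hWFF F hF).1 α hmem
    refine key_contra _ hWR hWF x A α α (Sum.inl (ETree.all x A α F)) (hmemP F hF)
      (fun _ => rfl) y B s s' _ rfl ?_ ?_
    · refine ⟨ETree.all x A α F, by simp [EItem.trees], ?_⟩
      rw [ETree.brList]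
      simp only [List.mem_map]
      exact ⟨_, hs, rfl⟩
    · obtain ⟨t, ht⟩ := brList_head F _ hs
      rw [ht, (hWFF F hF).2]
      simp
  -- well-formedness
  have hWFQ : ∀ it ∈ Fs.map Sum.inl ++ P', EItem.WF it := by
    intro it hit
    rcases List.mem_append.1 hit with h | h
    · obtain ⟨F, hF, rfl⟩ := List.mem_map.1 h
      exact (hWFF F hF).1
    · exact hWF _ (hmemP' _ h)
  -- weak regularity
  have hWRQ : WeakRegular (Fs.map Sum.inl ++ P') := by
    intro S hS T hT s s' r r' x₁ y₁ α₀ A₁ B₁ hbS hbT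
    rcases List.mem_append.1 hS with hS1 | hS1 <;> rcases List.mem_append.1 hT with hT1 | hT1
    · -- both stripped trees
      obtain ⟨F, hF, rfl⟩ := List.mem_map.1 hS1
      obtain ⟨F₂, hF₂, rfl⟩ := List.mem_map.1 hT1
      obtain ⟨G, hG, hbrS⟩ := hbS
      simp only [EItem.trees, List.mem_singleton] at hG
      rw [hG] at hbrS
      obtain ⟨G₂, hG₂, hbrT⟩ := hbT
      simp only [EItem.trees, List.mem_singleton] at hG₂
      rw [hG₂] at hbrT
      have memS : ((BEntry.fm (Formula.all x A) :: s) ++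
          [BEntry.fm (.all x₁ A₁), BEntry.fm (A₁.subst (subst1 x₁ (.var α₀)))] ++ s')
          ∈ EItem.branches (Sum.inl (ETree.all x A α F)) := by
        refine ⟨ETree.all x A α F, by simp [EItem.trees], ?_⟩
        rw [ETree.brList]
        simp only [List.mem_map]
        exact ⟨_, hbrS, rfl⟩
      have memT : ((BEntry.fm (Formula.all x A) :: r) ++
          [BEntry.fm (.all y₁ B₁), BEntry.fm (B₁.subst (subst1 y₁ (.var α₀)))] ++ r')
          ∈ EItem.branches (Sum.inl (ETree.all x A α F₂)) := by
        refine ⟨ETree.all x A α F₂, by simp [EItem.trees], ?_⟩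
        rw [ETree.brList]
        simp only [List.mem_map]
        exact ⟨_, hbrT, rfl⟩
      obtain ⟨h1, h2, _⟩ := hWR _ (hmemP F hF) _ (hmemP F₂ hF₂)
        (BEntry.fm (Formula.all x A) :: s) s' (BEntry.fm (Formula.all x A) :: r) r'
        x₁ y₁ α₀ A₁ B₁ memS memT
      refine ⟨by injection h1, h2, Iff.rfl⟩
    · -- S stripped, T in P'
      exfalso
      obtain ⟨F, hF, rfl⟩ := List.mem_map.1 hS1
      obtain ⟨G, hG, hbrS⟩ := hbS
      simp only [EItem.trees, List.mem_singleton] at hG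
      rw [hG] at hbrS
      have memS : ((BEntry.fm (Formula.all x A) :: s) ++
          [BEntry.fm (.all x₁ A₁), BEntry.fm (A₁.subst (subst1 x₁ (.var α₀)))] ++ s')
          ∈ EItem.branches (Sum.inl (ETree.all x A α F)) := by
        refine ⟨ETree.all x A α F, by simp [EItem.trees], ?_⟩
        rw [ETree.brList]
        simp only [List.mem_map]
        exact ⟨_, hbrS, rfl⟩
      obtain ⟨h1, h2, _⟩ := hWR _ (hmemP F hF) _ (hmemP' T hT1)
        (BEntry.fm (Formula.all x A) :: s) s' r r' x₁ y₁ α₀ A₁ B₁ memS hbT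
      injection h2 with hy hB
      subst hy; subst hB
      refine key_contra _ hWR hWF x A α α₀ T (hmemP' T hT1)
        (fun h => absurd h (hα T hT1)) x₁ A₁ s r'
        (s ++ [BEntry.fm (.all x₁ A₁), BEntry.fm (A₁.subst (subst1 x₁ (.var α₀)))] ++ r') rfl ?_ ?_
      · rw [← h1] at hbT
        exact hbT
      · obtain ⟨t, ht⟩ := brList_head F _ hbrS
        simp only [List.append_assoc, List.cons_append, List.nil_append] at ht ⊢
        rw [head?_append_cons s (BEntry.fm (Formula.all x₁ A₁))
          (BEntry.fm (A₁.subst (subst1 x₁ (.var α₀))) :: r')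
          (BEntry.fm (A₁.subst (subst1 x₁ (.var α₀))) :: s'), ht, (hWFF F hF).2]
        simp
    · -- S in P', T stripped
      exfalso
      obtain ⟨F, hF, rfl⟩ := List.mem_map.1 hT1
      obtain ⟨G, hG, hbrT⟩ := hbT
      simp only [EItem.trees, List.mem_singleton] at hG
      rw [hG] at hbrT
      have memT : ((BEntry.fm (Formula.all x A) :: r) ++
          [BEntry.fm (.all y₁ B₁), BEntry.fm (B₁.subst (subst1 y₁ (.var α₀)))] ++ r')
          ∈ EItem.branches (Sum.inl (ETree.all x A α F)) := by
        refine ⟨ETree.all x A α F, by simp [EItem.trees], ?_⟩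
        rw [ETree.brList]
        simp only [List.mem_map]
        exact ⟨_, hbrT, rfl⟩
      obtain ⟨h1, h2, _⟩ := hWR _ (hmemP' S hS1) _ (hmemP F hF)
        s s' (BEntry.fm (Formula.all x A) :: r) r' x₁ y₁ α₀ A₁ B₁ hbS memT
      injection h2 with hy hB
      subst hy; subst hB
      refine key_contra _ hWR hWF x A α α₀ S (hmemP' S hS1)
        (fun h => absurd h (hα S hS1)) x₁ A₁ r s'
        (r ++ [BEntry.fm (.all x₁ A₁), BEntry.fm (A₁.subst (subst1 x₁ (.var α₀)))] ++ s') rfl ?_ ?_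
      · rw [h1] at hbS
        exact hbS
      · obtain ⟨t, ht⟩ := brList_head F _ hbrT
        simp only [List.append_assoc, List.cons_append, List.nil_append] at ht ⊢
        rw [head?_append_cons r (BEntry.fm (Formula.all x₁ A₁))
          (BEntry.fm (A₁.subst (subst1 x₁ (.var α₀))) :: s')
          (BEntry.fm (A₁.subst (subst1 x₁ (.var α₀))) :: r'), ht, (hWFF F hF).2]
        simp
    · -- both in P'
      exact hWR _ (hmemP' S hS1) _ (hmemP' T hT1) s s' r r' x₁ y₁ α₀ A₁ B₁ hbS hbT
  -- acyclicity
  have hACQ : DepAcyclic (Fs.map Sum.inl ++ P') := by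
    intro o ho
    exact hAC (padO Fs.length o)
      (Relation.TransGen.lift (padO Fs.length) (fun a b hab => dep0_pad x A α Fs P' hab) o o ho)
  -- validity
  have hdpall : ∀ F : ETree, ETree.dp (.all x A α F) = F.dp := fun F => by rw [ETree.dp]
  have hdp : dpSeq (Fs.map Sum.inl ++ P') =
      dpSeq ((Fs.map fun F => Sum.inl (ETree.all x A α F)) ++ P') := by
    simp only [dpSeq, List.map_append, List.map_map]
    congr 1
    refine List.map_congr_left fun F hF => ?_
    simp only [Function.comp]
    rw [hdpall]
  -- shallow sequents
  have hshQ : shSeq (Fs.map Sum.inl ++ P') = Fs.map ETree.sh ++ shSeq P' := by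
    simp only [shSeq, List.filterMap_append, List.filterMap_map]
    congr 1
    show List.filterMap (some ∘ ETree.sh) Fs = _
    rw [List.filterMap_eq_map]
  have hshP : shSeq ((Fs.map fun F => Sum.inl (ETree.all x A α F)) ++ P') =
      Fs.map (fun _ => Formula.all x A) ++ shSeq P' := by
    simp only [shSeq, List.filterMap_append, List.filterMap_map]
    congr 1
    show List.filterMap (some ∘ fun _ => Formula.all x A) Fs = _
    rw [List.filterMap_eq_map]
  have hallmem : Formula.all x A ∈ shSeq ((Fs.map fun F => Sum.inl (ETree.all x A α F)) ++ P') := by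
    rw [hshP]
    obtain ⟨F, hF⟩ := List.exists_mem_of_ne_nil Fs hne
    exact List.mem_append_left _ (List.mem_map.2 ⟨F, hF, rfl⟩)
  -- eigenvariable condition
  have hECQ : EigenCond (Fs.map Sum.inl ++ P') := by
    intro q β hAE F₀ hF₀
    have hnot : ∀ F ∈ shSeq ((Fs.map fun F => Sum.inl (ETree.all x A α F)) ++ P'), β ∉ F.varList :=
      fun F hF => hEC _ β (allEigen_pad x A α Fs P' hAE) F hF
    rw [hshQ] at hF₀
    rcases List.mem_append.1 hF₀ with h | h
    · obtain ⟨F, hF, rfl⟩ := List.mem_map.1 h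
      rw [(hWFF F hF).2]
      intro hβ
      rcases fml_var_subst1 x α A β hβ with hβα | hmem
      · -- β = α : impossible
        obtain ⟨i, c, p⟩ := q
        obtain ⟨y, B, E, hE⟩ := hAE
        obtain ⟨it, hit, hhe⟩ := treeAt_hasEigen hE
        rw [hβα] at hhe
        by_cases hi : i < Fs.length
        · rw [(get_lt x A α Fs P' hi).1] at hit
          obtain rfl := Option.some.inj hit
          obtain ⟨E₀, hE₀, hmem₀⟩ := hhe
          simp only [EItem.trees, List.mem_singleton] at hE₀; subst hE₀
          exact hclaim _ (Fs.getElem_mem _) hmem₀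
        · rw [List.getElem?_append_right (by simpa using Nat.le_of_not_lt hi)] at hit
          simp only [List.length_map] at hit
          exact hα it (List.mem_of_getElem? hit) hhe
      · have := hnot (Formula.all x A) hallmem
        exact this (by rw [Formula.varList]; exact List.mem_cons_of_mem _ hmem)
    · exact hnot F₀ (by rw [hshP]; exact List.mem_append_right _ h)
  exact ⟨hWFQ, hWRQ, hACQ, hdp ▸ hTaut, hECQ⟩
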